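/- arXiv:1505.07964 — 2 statements merged into one kernel-verified Lean document; each statement's English description precedes it below -/
import Mathlib

section
/- In the projective model structure on Ch₊(R), a chain map i is a trivial cofibration if and only if i is injective and its cokernel is a strongly projective chain complex, meaning that for every chain map c : coker(i) → C and every chain map p : D → C that is surjective in strictly positive degrees, there exists a chain map ℓ : coker(i) → D with p ∘ ℓ = c. -/
open CategoryTheory Limits

universe u

/-- A non-negatively graded chain complex `K` is *strongly projective* if for every chain map
`c : K → C` and every chain map `p : D → C` that is surjective in strictly positive degrees,
there is a chain map `ℓ : K → D` with `ℓ ≫ p = c`. -/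
def StronglyProjectiveComplex {R : Type u} [Ring R] (K : ChainComplex (ModuleCat.{u} R) ℕ) :
    Prop :=
  ∀ (C D : ChainComplex (ModuleCat.{u} R) ℕ) (c : K ⟶ C) (p : D ⟶ C),
    (∀ n : ℕ, 0 < n → Function.Surjective (p.f n)) → ∃ ℓ : K ⟶ D, ℓ ≫ p = c

namespace SPAux

open ZeroObject

variable {R : Type u} [Ring R]

abbrev Ch (R : Type u) [Ring R] := ChainComplex (ModuleCat.{u} R) ℕ

def mkCh {A B : Ch R} (f : ∀ n, A.X n ⟶ B.X n)
    (comm : ∀ n, f (n + 1) ≫ B.d (n + 1) n = A.d (n + 1) n ≫ f n) : A ⟶ B where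
  f := f
  comm' := by
    rintro i j hij
    obtain rfl : j + 1 = i := hij
    exact comm j

lemma modproj (M : ModuleCat.{u} R) (h : Projective M) : Module.Projective R M :=
  (IsProjective.iff_projective M).mpr (Projective.of_iso (Iso.refl M).symm h)

lemma projmod (M : ModuleCat.{u} R) (h : Module.Projective R M) : Projective M :=
  Projective.of_iso (Iso.refl M) ((IsProjective.iff_projective M).mp h)

lemma dd (K : Ch R) (m k l : ℕ) (x : K.X m) : K.d k l (K.d m k x) = 0 :=
  ConcreteCategory.congr_hom (K.d_comp_d m k l) x

lemma exact_succ_iff (K : Ch R) (n : ℕ) :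
    K.ExactAt (n + 1) ↔
      ∀ x : K.X (n + 1), K.d (n + 1) n x = 0 → ∃ y, K.d (n + 2) (n + 1) y = x := by
  rw [K.exactAt_iff' (n + 2) (n + 1) n (by simp) (by simp [ChainComplex.next_nat_succ])]
  exact ShortComplex.moduleCat_exact_iff _

lemma exact_zero_iff (K : Ch R) :
    K.ExactAt 0 ↔ Function.Surjective (K.d 1 0) := by
  rw [K.exactAt_iff' 1 0 0 (by simp) (by simp [ChainComplex.next_nat_zero])]
  rw [ShortComplex.moduleCat_exact_iff]
  constructor
  · intro h x
    refine h x ?_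
    have hz : (HomologicalComplex.sc' K 1 0 0).g = 0 := K.shape 0 0 (by simp [ComplexShape.down])
    rw [hz]; rfl
  · intro h x _
    exact h x

lemma quasiIso_iff_acyclic_cokernel {X Y : Ch R} (i : X ⟶ Y) [Mono i] :
    QuasiIso i ↔ ∀ n, IsZero ((cokernel i).homology n) := by
  let S : ShortComplex (Ch R) := ShortComplex.mk i (cokernel.π i) (cokernel.condition i)
  have hS : S.ShortExact := { exact := S.exact_of_g_is_cokernel (cokernelIsCokernel i) }
  constructor
  · intro hq n
    have hepi : Epi (0 : X ⟶ (0 : Ch R)) :=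
      ⟨fun g h _ => (isZero_zero (Ch R)).eq_of_src g h⟩
    let S₁ : ShortComplex (Ch R) := ShortComplex.mk (𝟙 X) (0 : X ⟶ (0 : Ch R)) (by simp)
    have hS₁ : S₁.ShortExact :=
      { exact := (S₁.exact_iff_epi rfl).mpr (by dsimp [S₁]; infer_instance) }
    let φ : S₁ ⟶ S :=
      { τ₁ := 𝟙 X
        τ₂ := i
        τ₃ := 0
        comm₁₂ := by simp [S₁, S]
        comm₂₃ := by simp [S₁, S] }
    have h3 : QuasiIso φ.τ₃ := HomologicalComplex.HomologySequence.quasiIso_τ₃ φ hS₁ hS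
      (by dsimp [φ]; infer_instance) (by exact hq)
    have := h3.1 n
    rw [quasiIsoAt_iff_isIso_homologyMap] at this
    have hz : IsZero (((0 : Ch R)).homology n) :=
      (HomologicalComplex.homologyFunctor (ModuleCat.{u} R) (ComplexShape.down ℕ) n).map_isZero
        (isZero_zero (Ch R))
    exact IsZero.of_iso hz (asIso (HomologicalComplex.homologyMap φ.τ₃ n)).symm
  · intro hz
    rw [quasiIso_iff]
    intro n
    rw [quasiIsoAt_iff_isIso_homologyMap]
    have hmono : Mono (HomologicalComplex.homologyMap i n) := by
      have hex := hS.homology_exact₁ (n + 1) n rfl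
      refine hex.mono_g ?_
      exact (hz (n + 1)).eq_of_src _ _
    have hepi : Epi (HomologicalComplex.homologyMap i n) := by
      have hex := hS.homology_exact₂ n
      refine hex.epi_f ?_
      exact (hz n).eq_of_tgt _ _
    exact isIso_of_mono_of_epi _


section Disk

variable (n : ℕ) (M : ModuleCat.{u} R)

abbrev dQ (k : ℕ) : Type := PLift (k = n ∨ k = n + 1)

abbrev dskX (k : ℕ) : ModuleCat.{u} R := ModuleCat.of R (dQ n k → M)

def dskd (k : ℕ) : dskX n M (k + 1) ⟶ dskX n M k :=
  if hk : k = n then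
    ModuleCat.ofHom (LinearMap.funLeft R M (fun _ => ⟨Or.inr (by rw [hk])⟩))
  else 0

lemma dskd_eq_zero {k : ℕ} (h : ¬ k = n) : dskd n M k = 0 := dif_neg h

def disk : Ch R :=
  ChainComplex.of (dskX n M) (dskd n M) (by
    intro k
    by_cases hk : k = n
    · rw [dskd_eq_zero n M (by omega : ¬ (k + 1 = n)), zero_comp]
    · rw [dskd_eq_zero n M hk, comp_zero])

@[simp] lemma disk_X (k : ℕ) : (disk n M).X k = dskX n M k := rfl

lemma disk_d (k : ℕ) : (disk n M).d (k + 1) k = dskd n M k := by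
  simp [disk, ChainComplex.of]

/-- evaluation at degree n -/
def dskEval : dskX n M n ⟶ M := ModuleCat.ofHom (LinearMap.proj ⟨Or.inl rfl⟩)

/-- constant inclusion -/
def dskTo (k : ℕ) : M ⟶ dskX n M k := ModuleCat.ofHom (LinearMap.pi fun _ => LinearMap.id)

lemma dskTo_eval : dskTo n M n ≫ dskEval n M = 𝟙 M := rfl

variable {M} {N : ModuleCat.{u} R}

/-- induced map of disks -/
def dmap (q : M ⟶ N) : disk n M ⟶ disk n N :=
  mkCh (fun k => ModuleCat.ofHom (LinearMap.compLeft q.hom (dQ n k)))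
    (by
      intro k
      rw [disk_d, disk_d, dskd, dskd]
      by_cases hk : k = n
      · rw [dif_pos hk, dif_pos hk]; rfl
      · rw [dif_neg hk, dif_neg hk]; exact comp_zero.trans zero_comp.symm)

lemma dmap_surj (q : M ⟶ N) (hq : Function.Surjective q) (k : ℕ) :
    Function.Surjective ((dmap n q).f k) :=
  hq.comp_left

lemma dmap_eval (q : M ⟶ N) :
    (dmap n q).f n ≫ dskEval n N = dskEval n M ≫ q := rfl

variable {K : Ch R}

/-- the chain map `K ⟶ disk n N` induced by `g : K.X n ⟶ N` -/
def cmap (g : K.X n ⟶ N) : K ⟶ disk n N :=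
  mkCh
    (fun k =>
      if h1 : k = n then eqToHom (by rw [h1]) ≫ g ≫ dskTo n N k
      else if h2 : k = n + 1 then
        eqToHom (by rw [h2]) ≫ K.d (n + 1) n ≫ g ≫ dskTo n N k
      else 0)
    (by
      intro k
      rw [disk_d]
      by_cases hk : k = n
      · subst hk
        rw [dskd, dif_pos rfl]
        simp only [dif_neg (by omega : ¬ (k + 1 = k)), dif_pos rfl,
          eqToHom_refl, Category.id_comp]
        rfl
      · rw [dskd_eq_zero n N hk]; erw [comp_zero]
        simp only [dif_neg hk]
        by_cases h2 : k = n + 1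
        · subst h2
          rw [dif_pos rfl, eqToHom_refl, Category.id_comp, K.d_comp_d_assoc, zero_comp]
        · rw [dif_neg h2, comp_zero])

lemma cmap_f_n (g : K.X n ⟶ N) : (cmap n g).f n = g ≫ dskTo n N n := by
  show (if h1 : n = n then _ else _) = _
  rw [dif_pos rfl, eqToHom_refl, Category.id_comp]
  rfl

lemma strongly_projective_X {K : Ch R} (h : StronglyProjectiveComplex K) (n : ℕ) :
    Projective (K.X n) := by
  refine ⟨fun {E W} g e he => ?_⟩
  have hs : Function.Surjective e := (ModuleCat.epi_iff_surjective e).1 he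
  obtain ⟨ℓ, hl⟩ := h (disk n W) (disk n E) (cmap n g) (dmap n e)
    (fun k _ => dmap_surj n e hs k)
  refine ⟨ℓ.f n ≫ dskEval n E, ?_⟩
  have hn : ℓ.f n ≫ (dmap n e).f n = (cmap n g).f n := by
    rw [← HomologicalComplex.comp_f, hl]
  calc (ℓ.f n ≫ dskEval n E) ≫ e = ℓ.f n ≫ (dmap n e).f n ≫ dskEval n W := by
        rw [dmap_eval]; exact Category.assoc _ _ _
    _ = (cmap n g).f n ≫ dskEval n W := by rw [← hn]; exact (Category.assoc _ _ _).symm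
    _ = g := by rw [cmap_f_n]; simp [dskTo_eval]
end Disk


section Cyl

variable (K : Ch R)

abbrev cylX (k : ℕ) : ModuleCat.{u} R := ModuleCat.of R (K.X k × K.X (k + 1))

def cyld (k : ℕ) : cylX K (k + 1) ⟶ cylX K k :=
  ModuleCat.ofHom
    (LinearMap.prod ((K.d (k + 1) k).hom.comp (LinearMap.fst R _ _))
      ((LinearMap.fst R (K.X (k + 1)) (K.X (k + 1 + 1))) -
        (K.d (k + 1 + 1) (k + 1)).hom.comp (LinearMap.snd R _ _)))

def cyl : Ch R :=
  ChainComplex.of (cylX K) (cyld K) (by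
    intro k
    refine ModuleCat.hom_ext <| LinearMap.ext fun z => ?_
    refine Prod.ext ?_ ?_
    · show K.d (k + 1) k (K.d (k + 1 + 1) (k + 1) z.1) = (0 : cylX K k).1
      rw [dd]; rfl
    · show K.d (k + 1 + 1) (k + 1) z.1 -
        K.d (k + 1 + 1) (k + 1) (z.1 - K.d (k + 1 + 1 + 1) (k + 1 + 1) z.2) = (0 : cylX K k).2
      rw [map_sub, dd, sub_zero, sub_self]; rfl)

lemma cyl_d (k : ℕ) : (cyl K).d (k + 1) k = cyld K k := by
  simp [cyl, ChainComplex.of]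

def cylP : cyl K ⟶ K :=
  mkCh (fun k => ModuleCat.ofHom (LinearMap.fst R (K.X k) (K.X (k + 1))))
    (by
      intro k
      rw [cyl_d]
      rfl)

lemma cylP_surj (k : ℕ) : Function.Surjective ((cylP K).f k) :=
  fun x => ⟨(x, 0), rfl⟩

lemma exactAt_succ_of_sp (h : StronglyProjectiveComplex K) (n : ℕ) :
    K.ExactAt (n + 1) := by
  obtain ⟨ℓ, hl⟩ := h K (cyl K) (𝟙 K) (cylP K) (fun k _ => cylP_surj K k)
  rw [exact_succ_iff]
  intro x hx
  refine ⟨(ℓ.f (n + 1) x).2, ?_⟩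
  have hfst : ∀ k (y : K.X k), (ℓ.f k y).1 = y := by
    intro k y
    have := ConcreteCategory.congr_hom (congrArg (fun (φ : K ⟶ K) => φ.f k) hl) y
    exact this
  have hcomm := ConcreteCategory.congr_hom (ℓ.comm (n + 1) n) x
  -- hcomm : ℓ.f (n+1) ≫ (cyl K).d ... applied
  have hcomm' : (cyl K).d (n + 1) n (ℓ.f (n + 1) x) = ℓ.f n (K.d (n + 1) n x) := hcomm
  rw [cyl_d] at hcomm'
  have h2 := congrArg Prod.snd hcomm'
  -- second components
  have h2' : (ℓ.f (n + 1) x).1 - K.d (n + 1 + 1) (n + 1) (ℓ.f (n + 1) x).2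
      = (ℓ.f n (K.d (n + 1) n x)).2 := h2
  rw [hfst, hx, map_zero] at h2'
  have h3 : x - K.d (n + 1 + 1) (n + 1) (ℓ.f (n + 1) x).2 = 0 := h2'
  exact (sub_eq_zero.mp h3).symm
  
end Cyl

lemma exactAt_zero_of_sp (K : Ch R) (h : StronglyProjectiveComplex K) :
    K.ExactAt 0 := by
  rw [exact_zero_iff]
  intro x
  by_contra hx
  -- quotient module
  let Qm : ModuleCat.{u} R := ModuleCat.of R ((K.X 0) ⧸ LinearMap.range (K.d 1 0).hom)
  let mk : K.X 0 ⟶ Qm := ModuleCat.ofHom (LinearMap.range (K.d 1 0).hom).mkQ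
  have hcd : K.d 1 0 ≫ mk = 0 := by
    refine ModuleCat.hom_ext <| LinearMap.ext fun y => ?_
    show Submodule.Quotient.mk (K.d 1 0 y) = 0
    rw [Submodule.Quotient.mk_eq_zero]
    exact ⟨y, rfl⟩
  let c : K ⟶ (ChainComplex.single₀ (ModuleCat.{u} R)).obj Qm :=
    (ChainComplex.toSingle₀Equiv K Qm).symm ⟨mk, hcd⟩
  have hzero : ∀ n : ℕ, 0 < n →
      Subsingleton (((ChainComplex.single₀ (ModuleCat.{u} R)).obj Qm).X n) := by
    intro n hn
    have hz := HomologicalComplex.isZero_single_obj_X (ComplexShape.down ℕ) 0 Qm n (by omega)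
    have : 𝟙 (((ChainComplex.single₀ (ModuleCat.{u} R)).obj Qm).X n) = 0 := hz.eq_of_src _ _
    exact ⟨fun a b => by
      have ha := ConcreteCategory.congr_hom this a
      have hb := ConcreteCategory.congr_hom this b
      simp only [ModuleCat.id_apply] at ha hb
      rw [ha, hb]
      rfl⟩
  obtain ⟨ℓ, hl⟩ := h ((ChainComplex.single₀ (ModuleCat.{u} R)).obj Qm) 0 c 0
    (fun n hn => by
      have := hzero n hn
      exact fun y => ⟨0, Subsingleton.elim _ _⟩)
  rw [comp_zero] at hl
  have hc0 : c.f 0 = 0 := by rw [← hl]; rfl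
  have : mk x = 0 := by
    have := ConcreteCategory.congr_hom hc0 x
    simp [c, ChainComplex.toSingle₀Equiv_symm_apply_f_zero] at this
    exact this.trans rfl
  rw [show mk x = Submodule.Quotient.mk x from rfl, Submodule.Quotient.mk_eq_zero] at this
  obtain ⟨y, hy⟩ := this
  exact hx ⟨y, hy⟩
section Forward

variable (K : Ch R)

/-- cycles submodule -/
def Zc : ∀ n : ℕ, Submodule R (K.X n)
  | 0 => ⊤
  | (n + 1) => LinearMap.ker (K.d (n + 1) n).hom

/-- d with codomain restricted to cycles -/
def dz (n : ℕ) : K.X (n + 1) →ₗ[R] Zc K n :=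
  LinearMap.codRestrict (Zc K n) (K.d (n + 1) n).hom (by
    intro x
    match n with
    | 0 => exact Submodule.mem_top
    | (m + 1) => exact dd K (m + 2) (m + 1) m x)

@[simp] lemma dz_val (n : ℕ) (x : K.X (n + 1)) : (dz K n x : K.X n) = K.d (n + 1) n x := rfl

variable {K}

lemma dz_surj (hA0 : Function.Surjective (K.d 1 0))
    (hA : ∀ n (x : K.X (n + 1)), K.d (n + 1) n x = 0 → ∃ y, K.d (n + 2) (n + 1) y = x)
    (n : ℕ) : Function.Surjective (dz K n) := by
  intro z
  match n with
  | 0 =>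
    obtain ⟨y, hy⟩ := hA0 z.1
    exact ⟨y, Subtype.ext hy⟩
  | (m + 1) =>
    obtain ⟨y, hy⟩ := hA m z.1 z.2
    exact ⟨y, Subtype.ext hy⟩

lemma Zc_proj (hP : ∀ n, Projective (K.X n))
    (hA0 : Function.Surjective (K.d 1 0))
    (hA : ∀ n (x : K.X (n + 1)), K.d (n + 1) n x = 0 → ∃ y, K.d (n + 2) (n + 1) y = x)
    (n : ℕ) : Module.Projective R (Zc K n) := by
  induction n with
  | zero =>
    haveI := modproj _ (hP 0)
    exact Module.Projective.of_equiv (Submodule.topEquiv (R := R) (M := K.X 0)).symm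
  | succ n ih =>
    haveI := ih
    obtain ⟨s, hs⟩ := Module.projective_lifting_property (dz K n) LinearMap.id
      (dz_surj hA0 hA n)
    have hds : ∀ z : Zc K n, K.d (n + 1) n (s z) = z.1 := by
      intro z
      have := congrArg Subtype.val (LinearMap.congr_fun hs z)
      exact this
    haveI := modproj _ (hP (n + 1))
    refine Module.Projective.of_split (M := K.X (n + 1)) (Zc K (n + 1)).subtype
      (LinearMap.codRestrict (Zc K (n + 1)) (LinearMap.id - s ∘ₗ dz K n) ?_) ?_
    · intro x
      show K.d (n + 1) n (x - s (dz K n x)) = 0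
      rw [map_sub, hds, dz_val, sub_self]
    · refine LinearMap.ext fun z => Subtype.ext ?_
      show z.1 - s (dz K n z.1) = z.1
      have hz : dz K n z.1 = 0 := Subtype.ext z.2
      rw [hz, map_zero, sub_zero]

lemma sp_of_data (hP : ∀ n, Projective (K.X n))
    (hA0 : Function.Surjective (K.d 1 0))
    (hA : ∀ n (x : K.X (n + 1)), K.d (n + 1) n x = 0 → ∃ y, K.d (n + 2) (n + 1) y = x) :
    StronglyProjectiveComplex K := by
  -- choose sections σ
  have hσ' : ∀ n, ∃ σ : Zc K n →ₗ[R] K.X (n + 1), ∀ z, K.d (n + 1) n (σ z) = z.1 := by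
    intro n
    haveI := Zc_proj hP hA0 hA n
    obtain ⟨σ, hs⟩ := Module.projective_lifting_property (dz K n) LinearMap.id
      (dz_surj hA0 hA n)
    exact ⟨σ, fun z => congrArg Subtype.val (LinearMap.congr_fun hs z)⟩
  choose σ hσ using hσ'
  intro C D c p hp
  -- choose lifts t
  have ht' : ∀ n, ∃ t : Zc K n →ₗ[R] D.X (n + 1),
      ∀ z, p.f (n + 1) (t z) = c.f (n + 1) (σ n z) := by
    intro n
    haveI := Zc_proj hP hA0 hA n
    obtain ⟨t, htt⟩ := Module.projective_lifting_property
      (p.f (n + 1)).hom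
      ((c.f (n + 1)).hom ∘ₗ σ n)
      (hp (n + 1) (Nat.succ_pos n))
    exact ⟨t, fun z => LinearMap.congr_fun htt z⟩
  choose t ht using ht'
  -- maps into cycles
  let zmap : ∀ m, K.X m →ₗ[R] Zc K m := fun m =>
    match m with
    | 0 => LinearMap.codRestrict (Zc K 0) LinearMap.id (fun _ => Submodule.mem_top)
    | (m + 1) => LinearMap.codRestrict (Zc K (m + 1)) (LinearMap.id - (σ m) ∘ₗ (dz K m)) (by
        intro x
        show K.d (m + 1) m (x - σ m (dz K m x)) = 0
        rw [map_sub, hσ, dz_val, sub_self])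
  have zmap_zero_val : ∀ x : K.X 0, (zmap 0 x : K.X 0) = x := fun _ => rfl
  have zmap_succ_val : ∀ m (x : K.X (m + 1)),
      (zmap (m + 1) x : K.X (m + 1)) = x - σ m (dz K m x) := fun _ _ => rfl
  let L : ∀ m, K.X m ⟶ D.X m := fun m =>
    match m with
    | 0 => ModuleCat.ofHom <| (D.d 1 0).hom ∘ₗ (t 0) ∘ₗ (zmap 0)
    | (m + 1) => ModuleCat.ofHom <| (D.d (m + 2) (m + 1)).hom ∘ₗ (t (m + 1)) ∘ₗ
        (zmap (m + 1)) + (t m) ∘ₗ (dz K m)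
  have hL0 : ∀ x : K.X 0, L 0 x = D.d 1 0 (t 0 (zmap 0 x)) := fun _ => rfl
  have hLsucc : ∀ m (x : K.X (m + 1)),
      L (m + 1) x = D.d (m + 2) (m + 1) (t (m + 1) (zmap (m + 1) x)) + t m (dz K m x) :=
    fun _ _ => rfl
  refine ⟨mkCh L ?_, ?_⟩
  · -- chain map property
    intro m
    refine ModuleCat.hom_ext <| LinearMap.ext fun x => ?_
    show D.d (m + 1) m (L (m + 1) x) = L m (K.d (m + 1) m x)
    rw [hLsucc, map_add, dd D, zero_add]
    match m with
    | 0 =>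
      rw [hL0]
      congr 1
    | (m + 1) =>
      rw [hLsucc]
      have h1 : dz K m (K.d (m + 2) (m + 1) x) = 0 := Subtype.ext (by
        rw [dz_val]; exact dd K (m + 2) (m + 1) m x)
      rw [h1, map_zero, add_zero]
      congr 1
      refine congrArg (t (m + 1)) (Subtype.ext ?_)
      rw [zmap_succ_val, h1, map_zero, sub_zero, dz_val]
  · -- ℓ ≫ p = c
    refine HomologicalComplex.hom_ext _ _ ?_
    intro m
    refine ModuleCat.hom_ext <| LinearMap.ext fun x => ?_
    show p.f m (L m x) = c.f m x
    have pcomm : ∀ (i j : ℕ) (u : D.X i), p.f j (D.d i j u) = C.d i j (p.f i u) := by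
      intro i j u
      exact (ConcreteCategory.congr_hom (p.comm i j) u).symm
    have ccomm : ∀ (i j : ℕ) (u : K.X i), c.f j (K.d i j u) = C.d i j (c.f i u) := by
      intro i j u
      exact (ConcreteCategory.congr_hom (c.comm i j) u).symm
    match m with
    | 0 =>
      rw [hL0, pcomm 1 0, ht, ← ccomm 1 0, hσ, zmap_zero_val]
    | (m + 1) =>
      rw [hLsucc, map_add, pcomm (m + 2) (m + 1), ht, ht, ← ccomm (m + 2) (m + 1), hσ,
        zmap_succ_val, map_sub, sub_add_cancel]

end Forward


end SPAux

open SPAux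

/-- In the projective model structure on `Ch₊(R)` (weak equivalences the
quasi-isomorphisms, fibrations the maps surjective in strictly positive degrees, cofibrations
the injective maps with degree-wise projective cokernel), a chain map `i` is a trivial
cofibration if and only if `i` is injective and its cokernel is a strongly projective chain
complex. -/
theorem trivial_cofibrations_are_injections_with_strongly_projective_cokernel
    (R : Type u) [Ring R] {X Y : ChainComplex (ModuleCat.{u} R) ℕ} (i : X ⟶ Y) :
    ((∀ n : ℕ, Function.Injective (i.f n)) ∧
        (∀ n : ℕ, Projective (cokernel (i.f n))) ∧ QuasiIso i) ↔
      ((∀ n : ℕ, Function.Injective (i.f n)) ∧ StronglyProjectiveComplex (cokernel i)) := by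
  have cokIso : ∀ n : ℕ, (cokernel i).X n ≅ cokernel (i.f n) := fun n =>
    PreservesCokernel.iso (HomologicalComplex.eval (ModuleCat.{u} R) (ComplexShape.down ℕ) n) i
  constructor
  · rintro ⟨hinj, hproj, hq⟩
    haveI hmono : Mono i := by
      refine ⟨fun {W} g h hgh => ?_⟩
      refine HomologicalComplex.hom_ext _ _ (fun n => ?_)
      haveI : Mono (i.f n) := (ModuleCat.mono_iff_injective _).mpr (hinj n)
      have := congrArg (fun (φ : W ⟶ Y) => φ.f n) hgh
      simp only [HomologicalComplex.comp_f] at this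
      exact (cancel_mono (i.f n)).mp this
    refine ⟨hinj, ?_⟩
    have hz := (quasiIso_iff_acyclic_cokernel i).1 hq
    have hex : ∀ n, (cokernel i).ExactAt n := fun n =>
      (HomologicalComplex.exactAt_iff_isZero_homology _ _).mpr (hz n)
    have hA0 : Function.Surjective ((cokernel i).d 1 0) :=
      (exact_zero_iff _).mp (hex 0)
    have hA : ∀ n (x : (cokernel i).X (n + 1)), (cokernel i).d (n + 1) n x = 0 →
        ∃ y, (cokernel i).d (n + 2) (n + 1) y = x := fun n =>
      (exact_succ_iff _ n).mp (hex (n + 1))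
    have hPX : ∀ n, Projective ((cokernel i).X n) := fun n =>
      Projective.of_iso (cokIso n).symm (hproj n)
    exact sp_of_data hPX hA0 hA
  · rintro ⟨hinj, hsp⟩
    haveI hmono : Mono i := by
      refine ⟨fun {W} g h hgh => ?_⟩
      refine HomologicalComplex.hom_ext _ _ (fun n => ?_)
      haveI : Mono (i.f n) := (ModuleCat.mono_iff_injective _).mpr (hinj n)
      have := congrArg (fun (φ : W ⟶ Y) => φ.f n) hgh
      simp only [HomologicalComplex.comp_f] at this
      exact (cancel_mono (i.f n)).mp this
    refine ⟨hinj, fun n => Projective.of_iso (cokIso n) (strongly_projective_X hsp n), ?_⟩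
    rw [quasiIso_iff_acyclic_cokernel i]
    intro n
    rw [← HomologicalComplex.exactAt_iff_isZero_homology]
    match n with
    | 0 => exact exactAt_zero_of_sp _ hsp
    | (n + 1) => exact exactAt_succ_of_sp _ hsp n
end

section
/- Let T be a differential graded commutative algebra, n ≥ 1, and φ : S(S^{n−1}) → T a DG algebra morphism from the free algebra on the (n−1)-sphere complex, determined by the cycle κ = φ(1_{n−1}) ∈ ker d_T of degree n−1. Then the pushout of the generating cofibration ψ_n = S(i_n) : S(S^{n−1}) → S(D^n) along φ is the inclusion T → T ⊗ S(S^n) into the algebra obtained by freely adjoining a degree-n generator a with differential d(a) = κ; in particular, every pushout of a generating cofibration ψ_n is a relative Sullivan algebra. -/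
open CategoryTheory Limits

universe u

/-- A non-negatively graded, graded-commutative algebra over a commutative ring `k`,
presented via an internal grading by submodules. -/
structure GrAlg (k : Type u) [CommRing k] where
  A : Type u
  [ring : Ring A]
  [alg : Algebra k A]
  grading : ℕ → Submodule k A
  decomp : DirectSum.Decomposition grading
  one_mem : (1 : A) ∈ grading 0
  mul_mem : ∀ {m n : ℕ} {a b : A}, a ∈ grading m → b ∈ grading n → a * b ∈ grading (m + n)
  scomm : ∀ {m n : ℕ} {a b : A}, a ∈ grading m → b ∈ grading n →
    a * b = ((-1 : ℤ) ^ (m * n)) • (b * a)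

attribute [instance] GrAlg.ring GrAlg.alg

/-- A differential (non-negatively) graded commutative algebra over `k`:
a graded-commutative algebra together with a degree `-1` square-zero derivation. -/
structure DGA (k : Type u) [CommRing k] extends GrAlg k where
  d : A →ₗ[k] A
  d_mem : ∀ {n : ℕ} {a : A}, a ∈ grading (n + 1) → d a ∈ grading n
  d_zero : ∀ {a : A}, a ∈ grading 0 → d a = 0
  d_sq : ∀ a : A, d (d a) = 0
  leibniz : ∀ {m : ℕ} {a : A} (b : A), a ∈ grading m →
    d (a * b) = d a * b + ((-1 : ℤ) ^ m) • (a * d b)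

/-- Morphisms of differential graded algebras: grade-preserving algebra morphisms
commuting with the differentials. -/
structure DGAHom {k : Type u} [CommRing k] (X Y : DGA k) where
  toAlgHom : X.A →ₐ[k] Y.A
  grade : ∀ {n : ℕ} {a : X.A}, a ∈ X.grading n → toAlgHom a ∈ Y.grading n
  commd : ∀ a : X.A, toAlgHom (X.d a) = Y.d (toAlgHom a)

@[ext]
lemma DGAHom.ext {k : Type u} [CommRing k] {X Y : DGA k} {f g : DGAHom X Y}
    (h : f.toAlgHom = g.toAlgHom) : f = g := by
  cases f; cases g; cases h; rfl

instance DGACat (k : Type u) [CommRing k] : Category (DGA k) where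
  Hom := DGAHom
  id X := ⟨AlgHom.id k X.A, fun h => h, fun _ => rfl⟩
  comp f g := ⟨g.toAlgHom.comp f.toAlgHom, fun h => g.grade (f.grade h), by
    intro a
    simp [AlgHom.comp_apply, f.commd, g.commd]⟩
  id_comp f := by apply DGAHom.ext; exact AlgHom.id_comp f.toAlgHom
  comp_id f := by apply DGAHom.ext; exact AlgHom.comp_id f.toAlgHom
  assoc f g h := by apply DGAHom.ext; rfl

section AuxSquareZero

variable {k : Type u} [CommRing k]
set_option synthInstance.maxHeartbeats 400000

/-- The parity involution of a graded algebra, acting by `(-1)^m` in degree `m`. -/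
noncomputable def GrAlg.par (W : GrAlg k) : W.A →ₗ[k] W.A :=
  letI := W.decomp
  (DirectSum.coeLinearMap W.grading) ∘ₗ
    (DFinsupp.mapRange.linearMap
      (fun m => ((-1:ℤ)^m • LinearMap.id : W.grading m →ₗ[k] W.grading m))) ∘ₗ
    (DirectSum.decomposeLinearEquiv W.grading).toLinearMap

lemma GrAlg.par_of_mem (W : GrAlg k) {m : ℕ} {w : W.A} (hw : w ∈ W.grading m) :
    W.par w = ((-1:ℤ)^m) • w := by
  letI := W.decomp
  show (DirectSum.coeLinearMap W.grading)
    ((DFinsupp.mapRange.linearMap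
      (fun m => ((-1:ℤ)^m • LinearMap.id : W.grading m →ₗ[k] W.grading m)))
      ((DirectSum.decomposeLinearEquiv W.grading).toLinearMap w)) = _
  have h1 : ((DirectSum.decomposeLinearEquiv W.grading).toLinearMap : W.A →ₗ[k] _) w
      = DirectSum.decompose W.grading w := rfl
  rw [h1, DirectSum.decompose_of_mem W.grading hw,
    show (DirectSum.of (fun i => W.grading i) m) ⟨w, hw⟩ = DFinsupp.single m ⟨w,hw⟩ from rfl]
  have h2 : (DFinsupp.mapRange.linearMap
      (fun m => ((-1:ℤ)^m • LinearMap.id : W.grading m →ₗ[k] W.grading m)))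
      (DFinsupp.single m ⟨w, hw⟩)
      = DFinsupp.single m (((-1:ℤ)^m • LinearMap.id : W.grading m →ₗ[k] W.grading m) ⟨w,hw⟩) := by
    simp only [DFinsupp.mapRange.linearMap, LinearMap.coe_mk, AddHom.coe_mk,
      DFinsupp.mapRange_single]
    exact DFinsupp.mapRange_single (hf := fun _ => map_zero _)
  rw [h2, show (DFinsupp.single m (((-1:ℤ)^m • LinearMap.id : W.grading m →ₗ[k] W.grading m) ⟨w,hw⟩) : DirectSum _ _)
      = DirectSum.of (fun i => W.grading i) m (((-1:ℤ)^m • LinearMap.id : W.grading m →ₗ[k] W.grading m) ⟨w,hw⟩) from rfl,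
    DirectSum.coeLinearMap_of]
  have : ∀ z : ℤ, ∀ x : W.grading m, ((z • x : W.grading m) : W.A) = z • (x : W.A) := fun z x => rfl
  rw [LinearMap.smul_apply, LinearMap.id_apply, this]

lemma GrAlg.par_mem (W : GrAlg k) {m : ℕ} {w : W.A} (hw : w ∈ W.grading m) :
    W.par w ∈ W.grading m := by
  rw [W.par_of_mem hw]; exact zsmul_mem hw _

lemma GrAlg.par_mul (W : GrAlg k) (v w : W.A) : W.par (v * w) = W.par v * W.par w := by
  letI := W.decomp
  induction v using DirectSum.Decomposition.inductionOn W.grading with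
  | zero => simp
  | add a b ha hb => simp [add_mul, ha, hb]
  | @homogeneous m v' =>
    induction w using DirectSum.Decomposition.inductionOn W.grading with
    | zero => simp
    | add a b ha hb => simp [mul_add, ha, hb]
    | @homogeneous n w' =>
      rw [W.par_of_mem v'.2, W.par_of_mem w'.2, W.par_of_mem (W.mul_mem v'.2 w'.2)]
      rw [smul_mul_assoc, mul_smul_comm, smul_smul, ← pow_add]

lemma GrAlg.par_one (W : GrAlg k) : W.par 1 = 1 := by
  rw [W.par_of_mem W.one_mem]; simp

/-- Square-zero extension `W ⊕ εW` with `ε` odd of degree 1. -/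
def GrAlg.Ext (W : GrAlg k) : Type u := W.A × W.A

namespace GrAlg.Ext

variable {W : GrAlg k}

instance : AddCommGroup (GrAlg.Ext W) := Prod.instAddCommGroup
instance : Module k (GrAlg.Ext W) := Prod.instModule

noncomputable instance : Ring (GrAlg.Ext W) :=
  { (inferInstance : AddCommGroup (GrAlg.Ext W)) with
    mul := fun p q => (p.1 * q.1, p.2 * q.1 + W.par p.1 * q.2)
    one := ((1, 0) : W.A × W.A)
    mul_assoc := by
      rintro ⟨a, x⟩ ⟨b, y⟩ ⟨c, z⟩
      show (_ , _) = ((_,_) : W.A × W.A)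
      refine Prod.ext (mul_assoc a b c) ?_
      show (x * b + W.par a * y) * c + W.par (a * b) * z
        = x * (b * c) + W.par a * (y * c + W.par b * z)
      rw [W.par_mul]; noncomm_ring
    one_mul := by
      rintro ⟨a, x⟩
      show ((1 * a, 0 * a + W.par 1 * x) : W.A × W.A) = (a, x)
      rw [W.par_one]; simp
    mul_one := by
      rintro ⟨a, x⟩
      show ((a * 1, x * 1 + W.par a * 0) : W.A × W.A) = (a, x)
      simp
    left_distrib := by
      rintro ⟨a, x⟩ ⟨b, y⟩ ⟨c, z⟩
      show ((a * (b + c), x * (b + c) + W.par a * (y + z)) : W.A × W.A)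
        = (a * b + a * c, x * b + W.par a * y + (x * c + W.par a * z))
      refine Prod.ext (mul_add a b c) ?_; simp only []; noncomm_ring
    right_distrib := by
      rintro ⟨a, x⟩ ⟨b, y⟩ ⟨c, z⟩
      show (((a + b) * c, (x + y) * c + W.par (a + b) * z) : W.A × W.A)
        = (a * c + b * c, x * c + W.par a * z + (y * c + W.par b * z))
      refine Prod.ext (add_mul a b c) ?_; rw [map_add]; noncomm_ring
    zero_mul := by
      rintro ⟨a, x⟩
      show ((0 * a, 0 * a + W.par 0 * x) : W.A × W.A) = (0, 0)
      simp
    mul_zero := by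
      rintro ⟨a, x⟩
      show ((a * 0, x * 0 + W.par a * 0) : W.A × W.A) = (0, 0)
      simp }

/-- constructor -/
def mk (a x : W.A) : GrAlg.Ext W := (a, x)
def fst (p : GrAlg.Ext W) : W.A := Prod.fst p
def snd (p : GrAlg.Ext W) : W.A := Prod.snd p

@[simp] lemma fst_mk (a x : W.A) : fst (mk a x) = a := rfl
@[simp] lemma snd_mk (a x : W.A) : snd (mk a x) = x := rfl
@[ext] lemma ext {p q : GrAlg.Ext W} (h1 : fst p = fst q) (h2 : snd p = snd q) : p = q :=
  Prod.ext h1 h2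
@[simp] lemma mk_mul (a x b y : W.A) :
    mk a x * mk b y = mk (a * b) (x * b + W.par a * y) := rfl
@[simp] lemma one_def : (1 : GrAlg.Ext W) = mk 1 0 := rfl
@[simp] lemma mk_add (a x b y : W.A) : mk a x + mk b y = mk (a + b) (x + y) := rfl
@[simp] lemma mk_smul (r : k) (a x : W.A) : r • mk a x = mk (r • a) (r • x) := rfl
@[simp] lemma zero_def : (0 : GrAlg.Ext W) = mk 0 0 := rfl
@[simp] lemma fst_add (p q : GrAlg.Ext W) : fst (p + q) = fst p + fst q := rfl
@[simp] lemma snd_add (p q : GrAlg.Ext W) : snd (p + q) = snd p + snd q := rfl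
@[simp] lemma fst_smul (r : k) (p : GrAlg.Ext W) : fst (r • p) = r • fst p := rfl
@[simp] lemma snd_smul (r : k) (p : GrAlg.Ext W) : snd (r • p) = r • snd p := rfl
@[simp] lemma mk_fst_snd (p : GrAlg.Ext W) : mk (fst p) (snd p) = p := rfl

noncomputable instance : Algebra k (GrAlg.Ext W) :=
  Algebra.ofModule
    (by rintro r ⟨a, x⟩ ⟨b, y⟩
        show ((r • a * b, r • x * b + W.par (r • a) * y) : W.A × W.A)
          = r • ((a * b, x * b + W.par a * y) : W.A × W.A)
        rw [map_smul]
        refine Prod.ext (smul_mul_assoc r a b) ?_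
        show r • x * b + (r • W.par a) * y = r • (x * b + W.par a * y)
        simp [smul_mul_assoc, smul_add])
    (by rintro r ⟨a, x⟩ ⟨b, y⟩
        show ((a * r • b, x * r • b + W.par a * r • y) : W.A × W.A)
          = r • ((a * b, x * b + W.par a * y) : W.A × W.A)
        refine Prod.ext (mul_smul_comm r a b) ?_
        show x * r • b + W.par a * r • y = r • (x * b + W.par a * y)
        simp [mul_smul_comm, smul_add])

lemma algebraMap_def (r : k) : (algebraMap k (GrAlg.Ext W)) r = mk (algebraMap k W.A r) 0 := by
  rw [Algebra.algebraMap_eq_smul_one]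
  show r • mk 1 0 = _
  rw [mk_smul, Algebra.algebraMap_eq_smul_one, smul_zero]

end GrAlg.Ext

/-- The shifted grading: degree of the second ("ε") component. -/
def GrAlg.sGr (W : GrAlg k) : ℕ → Submodule k W.A
  | 0 => ⊥
  | (m+1) => W.grading m

namespace GrAlg.Ext

variable {W : GrAlg k}

/-- The grading on the square-zero extension. -/
def gr (W : GrAlg k) (m : ℕ) : Submodule k (GrAlg.Ext W) where
  carrier := {p | fst p ∈ W.grading m ∧ snd p ∈ GrAlg.sGr W m}
  add_mem' := fun h h' => ⟨add_mem h.1 h'.1, add_mem h.2 h'.2⟩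
  zero_mem' := ⟨zero_mem _, zero_mem _⟩
  smul_mem' := fun r p h => ⟨Submodule.smul_mem _ r h.1, Submodule.smul_mem _ r h.2⟩

lemma mem_gr {p : GrAlg.Ext W} {m : ℕ} :
    p ∈ gr W m ↔ fst p ∈ W.grading m ∧ snd p ∈ GrAlg.sGr W m := Iff.rfl

/-- First inclusion into degree `m`. -/
def j1 (m : ℕ) : W.grading m →ₗ[k] gr W m where
  toFun w := ⟨mk w 0, ⟨w.2, zero_mem _⟩⟩
  map_add' w w' := by ext <;> simp
  map_smul' r w := by ext <;> simp

/-- Second inclusion into degree `m+1`. -/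
def j2 (m : ℕ) : W.grading m →ₗ[k] gr W (m + 1) where
  toFun w := ⟨mk 0 w, ⟨zero_mem _, w.2⟩⟩
  map_add' w w' := by ext <;> simp
  map_smul' r w := by ext <;> simp

noncomputable def F (W : GrAlg k) : (DirectSum ℕ (fun m => W.grading m)) →ₗ[k] DirectSum ℕ (fun m => gr W m) :=
  DirectSum.toModule k ℕ _ (fun m => (DirectSum.lof k ℕ (fun m => gr W m) m).comp (j1 m))

noncomputable def G (W : GrAlg k) : (DirectSum ℕ (fun m => W.grading m)) →ₗ[k] DirectSum ℕ (fun m => gr W m) :=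
  DirectSum.toModule k ℕ _ (fun m => (DirectSum.lof k ℕ (fun m => gr W m) (m+1)).comp (j2 m))

noncomputable def fstL : GrAlg.Ext W →ₗ[k] W.A where
  toFun := fst
  map_add' _ _ := rfl
  map_smul' _ _ := rfl

noncomputable def sndL : GrAlg.Ext W →ₗ[k] W.A where
  toFun := snd
  map_add' _ _ := rfl
  map_smul' _ _ := rfl

lemma coe_decompose (W : GrAlg k) [DirectSum.Decomposition W.grading] (v : W.A) :
    DirectSum.coeLinearMap W.grading (DirectSum.decompose W.grading v) = v := by
  induction v using DirectSum.Decomposition.inductionOn W.grading with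
  | zero => simp
  | add a b ha hb => rw [DirectSum.decompose_add, map_add, ha, hb]
  | @homogeneous m v' => rw [DirectSum.decompose_coe, DirectSum.coeLinearMap_of]

/-- The decomposition map. -/
noncomputable def Dmap (W : GrAlg k) : GrAlg.Ext W →ₗ[k] DirectSum ℕ (fun m => gr W m) :=
  letI := W.decomp
  (F W).comp ((DirectSum.decomposeLinearEquiv W.grading).toLinearMap.comp fstL) +
  (G W).comp ((DirectSum.decomposeLinearEquiv W.grading).toLinearMap.comp sndL)

set_option maxHeartbeats 1000000 in
noncomputable instance instDecomp : DirectSum.Decomposition (gr W) := by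
  letI := W.decomp
  refine DirectSum.Decomposition.ofLinearMap _ (Dmap W) ?_ ?_
  · -- coeLinearMap ∘ Dmap = id
    have hF : (DirectSum.coeLinearMap (gr W)).comp (F W)
        = (LinearMap.prod LinearMap.id (0 : W.A →ₗ[k] W.A) :
            W.A →ₗ[k] W.A × W.A).comp (DirectSum.coeLinearMap W.grading) := by
      apply DirectSum.linearMap_ext
      intro m
      refine LinearMap.ext fun w => ?_
      show DirectSum.coeLinearMap (gr W) (F W (DirectSum.lof k ℕ (fun m => W.grading m) m w))
        = LinearMap.prod LinearMap.id 0 (DirectSum.coeLinearMap W.grading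
            (DirectSum.lof k ℕ (fun m => W.grading m) m w))
      rw [F, DirectSum.toModule_lof, LinearMap.comp_apply,
        show DirectSum.lof k ℕ (fun m => gr W m) m (j1 m w)
          = DirectSum.of (fun m => gr W m) m (j1 m w) from rfl,
        DirectSum.coeLinearMap_of,
        show DirectSum.lof k ℕ (fun m => W.grading m) m w
          = DirectSum.of (fun m => W.grading m) m w from rfl,
        DirectSum.coeLinearMap_of]
      rfl
    have hG : (DirectSum.coeLinearMap (gr W)).comp (G W)
        = (LinearMap.prod (0 : W.A →ₗ[k] W.A) LinearMap.id :
            W.A →ₗ[k] W.A × W.A).comp (DirectSum.coeLinearMap W.grading) := by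
      apply DirectSum.linearMap_ext
      intro m
      refine LinearMap.ext fun w => ?_
      show DirectSum.coeLinearMap (gr W) (G W (DirectSum.lof k ℕ (fun m => W.grading m) m w))
        = LinearMap.prod 0 LinearMap.id (DirectSum.coeLinearMap W.grading
            (DirectSum.lof k ℕ (fun m => W.grading m) m w))
      rw [G, DirectSum.toModule_lof, LinearMap.comp_apply,
        show DirectSum.lof k ℕ (fun m => gr W m) (m+1) (j2 m w)
          = DirectSum.of (fun m => gr W m) (m+1) (j2 m w) from rfl,
        DirectSum.coeLinearMap_of,
        show DirectSum.lof k ℕ (fun m => W.grading m) m w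
          = DirectSum.of (fun m => W.grading m) m w from rfl,
        DirectSum.coeLinearMap_of]
      rfl
    refine LinearMap.ext fun p => ?_
    have h1 : Dmap W p = F W (DirectSum.decompose W.grading (fst p))
        + G W (DirectSum.decompose W.grading (snd p)) := rfl
    show DirectSum.coeLinearMap (gr W) (Dmap W p) = p
    have hF' : ∀ v, DirectSum.coeLinearMap (gr W) (F W v)
        = LinearMap.prod LinearMap.id 0 (DirectSum.coeLinearMap W.grading v) :=
      fun v => DFunLike.congr_fun hF v
    have hG' : ∀ v, DirectSum.coeLinearMap (gr W) (G W v)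
        = LinearMap.prod 0 LinearMap.id (DirectSum.coeLinearMap W.grading v) :=
      fun v => DFunLike.congr_fun hG v
    rw [h1, map_add, hF', hG', coe_decompose, coe_decompose]
    show mk (fst p) 0 + mk 0 (snd p) = p
    rw [mk_add, add_zero, zero_add, mk_fst_snd]
  · -- Dmap ∘ coeLinearMap = id
    apply DirectSum.linearMap_ext
    intro m
    refine LinearMap.ext fun c => ?_
    obtain ⟨p, hp1, hp2⟩ := c
    show Dmap W (DirectSum.coeLinearMap (gr W)
        (DirectSum.of (fun i => gr W i) m ⟨p, hp1, hp2⟩))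
      = DirectSum.of (fun i => gr W i) m ⟨p, hp1, hp2⟩
    rw [DirectSum.coeLinearMap_of]
    have hd : Dmap W p = F W (DirectSum.decompose W.grading (fst p))
        + G W (DirectSum.decompose W.grading (snd p)) := rfl
    rw [hd, DirectSum.decompose_of_mem W.grading hp1]
    have hF1 : F W (DirectSum.of (fun i => W.grading i) m ⟨fst p, hp1⟩)
        = DirectSum.of (fun m => gr W m) m (j1 m ⟨fst p, hp1⟩) := by
      rw [show DirectSum.of (fun i => W.grading i) m ⟨fst p, hp1⟩
          = DirectSum.lof k ℕ (fun i => W.grading i) m ⟨fst p, hp1⟩ from rfl, F,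
        DirectSum.toModule_lof]
      rfl
    rw [hF1]
    match m, hp1, hp2 with
    | 0, hp1, hp2 =>
      have hx : snd p = 0 := by simpa [GrAlg.sGr] using hp2
      rw [show G W (DirectSum.decompose W.grading (snd p)) = 0 from by
        rw [hx, DirectSum.decompose_zero, map_zero], add_zero]
      exact congrArg _ (Subtype.ext (by
        refine ext ?_ ?_
        · rfl
        · exact hx.symm))
    | (m'+1), hp1, hp2 =>
      have hx : snd p ∈ W.grading m' := hp2
      rw [DirectSum.decompose_of_mem W.grading hx]
      have hG1 : G W (DirectSum.of (fun i => W.grading i) m' ⟨snd p, hx⟩)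
          = DirectSum.of (fun m => gr W m) (m'+1) (j2 m' ⟨snd p, hx⟩) := by
        rw [show DirectSum.of (fun i => W.grading i) m' ⟨snd p, hx⟩
            = DirectSum.lof k ℕ (fun i => W.grading i) m' ⟨snd p, hx⟩ from rfl, G,
          DirectSum.toModule_lof]
        rfl
      rw [hG1, ← map_add]
      exact congrArg _ (Subtype.ext (by
        refine ext ?_ ?_
        · show fst p + 0 = fst p
          rw [add_zero]
        · show 0 + snd p = snd p
          rw [zero_add]))

end GrAlg.Ext

namespace GrAlg.Ext

variable {W : GrAlg k}

@[simp] lemma fst_mul (p q : GrAlg.Ext W) : fst (p * q) = fst p * fst q := rfl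
@[simp] lemma snd_mul (p q : GrAlg.Ext W) :
    snd (p * q) = snd p * fst q + W.par (fst p) * snd q := rfl
@[simp] lemma fst_zsmul (z : ℤ) (p : GrAlg.Ext W) : fst (z • p) = z • fst p := rfl
@[simp] lemma snd_zsmul (z : ℤ) (p : GrAlg.Ext W) : snd (z • p) = z • snd p := rfl

lemma negpow_even (e c : ℕ) : ((-1:ℤ))^(e + 2*c) = (-1)^e := by
  rw [pow_add, pow_mul]; simp

end GrAlg.Ext

open GrAlg.Ext in
/-- The square-zero extension as a graded algebra. -/
noncomputable def GrAlg.ext (W : GrAlg k) : GrAlg k where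
  A := GrAlg.Ext W
  grading := GrAlg.Ext.gr W
  decomp := GrAlg.Ext.instDecomp
  one_mem := ⟨W.one_mem, zero_mem _⟩
  mul_mem := by
    rintro m n p q ⟨hp1, hp2⟩ ⟨hq1, hq2⟩
    refine ⟨?_, ?_⟩
    · rw [fst_mul]; exact W.mul_mem hp1 hq1
    · rw [snd_mul]
      refine add_mem ?_ ?_
      · match m, hp2 with
        | 0, hp2 =>
          have : snd p = 0 := by simpa [GrAlg.sGr] using hp2
          rw [this, zero_mul]; exact zero_mem _
        | (m'+1), hp2 =>
          have h : snd p * fst q ∈ W.grading (m' + n) := W.mul_mem hp2 hq1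
          show snd p * fst q ∈ GrAlg.sGr W (m' + 1 + n)
          have e : m' + 1 + n = (m' + n) + 1 := by omega
          rw [e]; exact h
      · match n, hq2 with
        | 0, hq2 =>
          have : snd q = 0 := by simpa [GrAlg.sGr] using hq2
          rw [this, mul_zero]; exact zero_mem _
        | (n'+1), hq2 =>
          have h : W.par (fst p) * snd q ∈ W.grading (m + n') :=
            W.mul_mem (W.par_mem hp1) hq2
          show W.par (fst p) * snd q ∈ GrAlg.sGr W (m + (n' + 1))
          have e : m + (n' + 1) = (m + n') + 1 := by omega
          rw [e]; exact h
  scomm := by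
    rintro m n p q ⟨hp1, hp2⟩ ⟨hq1, hq2⟩
    refine GrAlg.Ext.ext ?_ ?_
    · rw [fst_mul, fst_zsmul, fst_mul]; exact W.scomm hp1 hq1
    · rw [snd_mul, snd_zsmul, snd_mul, smul_add]
      rw [W.par_of_mem hp1, W.par_of_mem hq1, smul_mul_assoc, smul_mul_assoc,
        smul_smul, ← pow_add]
      match m, n, hp2, hq2 with
      | 0, n, hp2, hq2 =>
        have hx : snd p = 0 := by simpa [GrAlg.sGr] using hp2
        rw [hx, zero_mul, zero_add, mul_zero, smul_zero, add_zero,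
          pow_zero, one_smul, Nat.zero_mul, pow_zero, one_smul]
        match n, hq2 with
        | 0, hq2 =>
          have hy : snd q = 0 := by simpa [GrAlg.sGr] using hq2
          rw [hy, mul_zero, zero_mul]
        | (n'+1), hq2 =>
          rw [W.scomm hp1 hq2, Nat.zero_mul, pow_zero, one_smul]
      | (m'+1), 0, hp2, hq2 =>
        have hy : snd q = 0 := by simpa [GrAlg.sGr] using hq2
        rw [hy, mul_zero, smul_zero, add_zero, zero_mul, smul_zero, zero_add,
          Nat.mul_zero, pow_zero, one_smul, W.scomm hp2 hq1, Nat.mul_zero,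
          pow_zero, one_smul]
      | (m'+1), (n'+1), hp2, hq2 =>
        rw [W.scomm hp2 hq1, W.scomm hp1 hq2, smul_smul, ← pow_add]
        have e1 : (m' + 1) + (m' + 1) * n' = (m' + 1) * (n' + 1) := by ring
        have e2 : (m' + 1) * (n' + 1) + (n' + 1) = m' * (n' + 1) + 2 * (n' + 1) := by ring
        rw [e1, e2, negpow_even]
        exact add_comm _ _

open GrAlg.Ext in
/-- The crucial step: the algebra map supplied by the freeness property automatically
commutes with the differentials. -/
lemma commd_key {T E : DGA k} (n : ℕ) (ι : T ⟶ E) (a : E.A) (ha : a ∈ E.grading n)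
    (hfree : ∀ (B : GrAlg k) (p : T.A →ₐ[k] B.A),
      (∀ (m : ℕ) (t : T.A), t ∈ T.grading m → p t ∈ B.grading m) →
      ∀ b : B.A, b ∈ B.grading n →
        ∃! q : E.A →ₐ[k] B.A,
          (∀ (m : ℕ) (e : E.A), e ∈ E.grading m → q e ∈ B.grading m) ∧
          q.comp ι.toAlgHom = p ∧ q a = b)
    (V : DGA k) (s : T ⟶ V) (q : E.A →ₐ[k] V.A)
    (hqg : ∀ (m : ℕ) (e : E.A), e ∈ E.grading m → q e ∈ V.grading m)
    (hqι : q.comp ι.toAlgHom = s.toAlgHom)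
    (hqd : q (E.d a) = V.d (q a)) :
    ∀ e, q (E.d e) = V.d (q e) := by
  classical
  set δ : E.A →ₗ[k] V.A := q.toLinearMap.comp E.d - V.d.comp q.toLinearMap with hδ
  have hδ_apply : ∀ e, δ e = q (E.d e) - V.d (q e) := fun e => rfl
  have hδ0 : ∀ (m : ℕ) (e : E.A), e ∈ E.grading m → δ e ∈ GrAlg.sGr V.toGrAlg m := by
    intro m e he
    match m with
    | 0 =>
      have h1 : E.d e = 0 := E.d_zero he
      have h2 : V.d (q e) = 0 := V.d_zero (hqg 0 e he)
      show δ e ∈ (⊥ : Submodule k V.A)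
      rw [hδ_apply, h1, map_zero, h2, sub_zero]
      exact zero_mem _
    | (m+1) =>
      show δ e ∈ V.grading m
      rw [hδ_apply]
      exact sub_mem (hqg m _ (E.d_mem he)) (V.d_mem (hqg (m+1) e he))
  have hδmul : ∀ e e', δ (e * e') = δ e * q e' + V.par (q e) * δ e' := by
    letI := E.decomp
    intro e
    induction e using DirectSum.Decomposition.inductionOn E.grading with
    | zero => intro e'; simp [hδ_apply]
    | add e₁ e₂ h1 h2 =>
      intro e'
      rw [add_mul, map_add, h1, h2, map_add, map_add, add_mul, map_add, add_mul]
      abel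
    | @homogeneous m e₀ =>
      intro e'
      obtain ⟨e, he⟩ := e₀
      have hpar : V.par (q e) = ((-1:ℤ)^m) • q e := V.par_of_mem (hqg m e he)
      simp only [Subtype.coe_mk, hδ_apply, E.leibniz e' he, map_add, map_zsmul, map_mul,
        V.leibniz (q e') (hqg m e he), hpar, sub_mul, smul_mul_assoc, mul_sub, smul_sub]
      abel
  -- the two competing algebra morphisms into the square-zero extension
  set B : GrAlg k := GrAlg.ext V.toGrAlg with hB
  have hΦL : ∀ _ : Unit, True := fun _ => trivial
  let ΦL : E.A →ₗ[k] B.A :=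
    { toFun := fun e => mk (q e) (δ e)
      map_add' := fun e e' => by
        show mk (q (e + e')) (δ (e + e')) = mk (q e) (δ e) + mk (q e') (δ e')
        rw [map_add, map_add, mk_add]
      map_smul' := fun r e => by
        show mk (q (r • e)) (δ (r • e)) = r • mk (q e) (δ e)
        rw [map_smul, map_smul, mk_smul] }
  let Φ : E.A →ₐ[k] B.A := AlgHom.ofLinearMap ΦL
    (by show mk (q 1) (δ 1) = 1
        rw [map_one, hδ_apply, E.d_zero E.one_mem, map_zero, map_one,
          V.d_zero V.one_mem, sub_zero]
        rfl)
    (by intro e e'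
        show mk (q (e * e')) (δ (e * e')) = mk (q e) (δ e) * mk (q e') (δ e')
        rw [mk_mul, map_mul, hδmul])
  let ΨL : E.A →ₗ[k] B.A :=
    { toFun := fun e => mk (q e) 0
      map_add' := fun e e' => by
        show mk (q (e + e')) 0 = mk (q e) 0 + mk (q e') 0
        rw [map_add, mk_add, add_zero]
      map_smul' := fun r e => by
        show mk (q (r • e)) 0 = r • mk (q e) 0
        rw [map_smul, mk_smul, smul_zero] }
  let Ψ : E.A →ₐ[k] B.A := AlgHom.ofLinearMap ΨL
    (by show mk (q 1) 0 = 1; rw [map_one]; rfl)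
    (by intro e e'
        show mk (q (e * e')) 0 = mk (q e) 0 * mk (q e') 0
        rw [mk_mul, map_mul, zero_mul, mul_zero, add_zero])
  have hδι : ∀ t : T.A, δ (ι.toAlgHom t) = 0 := by
    intro t
    have h1 : q (ι.toAlgHom t) = s.toAlgHom t := DFunLike.congr_fun hqι t
    have h2 : q (ι.toAlgHom (T.d t)) = s.toAlgHom (T.d t) := DFunLike.congr_fun hqι (T.d t)
    rw [hδ_apply, ← ι.commd t, h2, s.commd, h1, sub_self]
  obtain ⟨q₀, -, huniq⟩ := hfree B (Ψ.comp ι.toAlgHom)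
    (fun m t ht => ⟨hqg m _ (ι.grade ht), zero_mem _⟩)
    (mk (q a) 0) ⟨hqg n a ha, zero_mem _⟩
  have hΦ : Φ = q₀ := huniq Φ ⟨fun m e he => ⟨hqg m e he, hδ0 m e he⟩,
    (by ext t
        show mk (q (ι.toAlgHom t)) (δ (ι.toAlgHom t)) = mk (q (ι.toAlgHom t)) 0
        rw [hδι]),
    (by show mk (q a) (δ a) = mk (q a) 0
        rw [hδ_apply, hqd, sub_self])⟩
  have hΨ : Ψ = q₀ := huniq Ψ ⟨fun m e he => ⟨hqg m e he, zero_mem _⟩, rfl, rfl⟩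
  intro e
  have := DFunLike.congr_fun (hΦ.trans hΨ.symm) e
  have h2 : δ e = 0 := by
    have := congrArg snd this
    exact this
  have := sub_eq_zero.mp (by rw [← hδ_apply]; exact h2)
  exact this

end AuxSquareZero

/-- A morphism of DG algebras is surjective in all strictly positive degrees. -/
def posSurj {k : Type u} [CommRing k] {X Y : DGA k} (f : X ⟶ Y) : Prop :=
  ∀ n : ℕ, 0 < n → ∀ b ∈ Y.grading n, ∃ a ∈ X.grading n, f.toAlgHom a = b

/-- A morphism of DG algebras is a quasi-isomorphism: it induces a bijection on homology
(expressed elementwise on homogeneous cycles). -/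
def isQuasiIso {k : Type u} [CommRing k] {X Y : DGA k} (f : X ⟶ Y) : Prop :=
  (∀ (n : ℕ) (b : Y.A), b ∈ Y.grading n → Y.d b = 0 →
      ∃ a ∈ X.grading n, X.d a = 0 ∧ ∃ c ∈ Y.grading (n + 1), f.toAlgHom a - b = Y.d c) ∧
  (∀ (n : ℕ) (a : X.A), a ∈ X.grading n → X.d a = 0 →
      (∃ c ∈ Y.grading (n + 1), f.toAlgHom a = Y.d c) →
      ∃ e ∈ X.grading (n + 1), X.d e = a)

/-- `f : A ⟶ E` is a relative Sullivan algebra: `E` is free as a graded-commutative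
algebra over `A` on a well-ordered family of homogeneous generators, and the differential
is lowering. -/
def IsRelSullivan {k : Type u} [CommRing k] {A E : DGA k} (f : A ⟶ E) : Prop :=
  ∃ (J : Type u) (_ : LinearOrder J) (_ : WellFoundedLT J) (g : J → E.A) (deg : J → ℕ),
    (∀ j : J, g j ∈ E.grading (deg j)) ∧
    (∀ (B : GrAlg k) (p : A.A →ₐ[k] B.A), (∀ (n : ℕ) (a : A.A), a ∈ A.grading n → p a ∈ B.grading n) →
      ∀ b : J → B.A, (∀ j, b j ∈ B.grading (deg j)) →
        ∃! q : E.A →ₐ[k] B.A,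
          (∀ (n : ℕ) (a : E.A), a ∈ E.grading n → q a ∈ B.grading n) ∧
          q.comp f.toAlgHom = p ∧ ∀ j, q (g j) = b j) ∧
    (∀ j : J, E.d (g j) ∈ Algebra.adjoin k (Set.range f.toAlgHom ∪ g '' {i | i < j}))

/-- Let `T` be a differential graded commutative algebra, `n ≥ 1`, and
`φ : S(S^{n-1}) → T` the DG algebra morphism from the free DG algebra `Sph` on one degree
`n-1` cycle generator, determined by a cycle `κ ∈ ker d_T` of degree `n-1`.  Then the
pushout of the generating cofibration `ψ = S(i_n) : S(S^{n-1}) → S(D^n)` along `φ` is the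
inclusion `ι : T → T ⊗ S(S^n)` into the algebra `E` obtained by freely adjoining a degree
`n` generator `a` with `d a = κ`; in particular this pushout is a relative Sullivan
algebra. -/
theorem pushout_of_generating_cofibration
    {k : Type u} [CommRing k] (n : ℕ) (hn : 1 ≤ n)
    -- the free DG algebra `Sph = S(S^{n-1})` on a degree `n-1` cycle generator `genS`:
    (Sph : DGA k) (genS : Sph.A) (hgenS : genS ∈ Sph.grading (n - 1))
    (hgenSd : Sph.d genS = 0)
    (hSphUP : ∀ (B : DGA k) (b : B.A), b ∈ B.grading (n - 1) → B.d b = 0 →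
      ∃! φ' : Sph ⟶ B, φ'.toAlgHom genS = b)
    -- the free DG algebra `Dsc = S(D^n)` on a degree `n` generator `genD`:
    (Dsc : DGA k) (genD : Dsc.A) (hgenD : genD ∈ Dsc.grading n)
    (hDscUP : ∀ (B : DGA k) (b : B.A), b ∈ B.grading n → ∃! ψ' : Dsc ⟶ B, ψ'.toAlgHom genD = b)
    -- the generating cofibration `ψ = S(i_n)`, sending `genS` to `d genD`:
    (ψ : Sph ⟶ Dsc) (hψ : ψ.toAlgHom genS = Dsc.d genD)
    -- the DG algebra `T` and the morphism `φ` determined by the cycle `κ`: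
    (T : DGA k) (κ : T.A) (hκ : κ ∈ T.grading (n - 1)) (hκd : T.d κ = 0)
    (φ : Sph ⟶ T) (hφ : φ.toAlgHom genS = κ)
    -- the algebra `E = T ⊗ S(S^n)` obtained by freely adjoining `a` with `d a = κ`:
    (E : DGA k) (ι : T ⟶ E) (a : E.A) (ha : a ∈ E.grading n)
    (hda : E.d a = ι.toAlgHom κ)
    (hfree : ∀ (B : GrAlg k) (p : T.A →ₐ[k] B.A),
      (∀ (m : ℕ) (t : T.A), t ∈ T.grading m → p t ∈ B.grading m) →
      ∀ b : B.A, b ∈ B.grading n →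
        ∃! q : E.A →ₐ[k] B.A,
          (∀ (m : ℕ) (e : E.A), e ∈ E.grading m → q e ∈ B.grading m) ∧
          q.comp ι.toAlgHom = p ∧ q a = b)
    -- the morphism `j : S(D^n) → E` sending `genD` to `a`:
    (j : Dsc ⟶ E) (hj : j.toAlgHom genD = a) :
    IsPushout φ ψ ι j ∧ IsRelSullivan ι := by
    classical
  have hιk_mem : ι.toAlgHom κ ∈ E.grading (n - 1) := ι.grade hκ
  have hιk_d : E.d (ι.toAlgHom κ) = 0 := by
    rw [← ι.commd κ, hκd, map_zero]
  -- commutativity of the square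
  obtain ⟨χ, hχ, huχ⟩ := hSphUP E (ι.toAlgHom κ) hιk_mem hιk_d
  have h1 : (φ ≫ ι).toAlgHom genS = ι.toAlgHom κ := by
    show ι.toAlgHom (φ.toAlgHom genS) = _
    rw [hφ]
  have h2 : (ψ ≫ j).toAlgHom genS = ι.toAlgHom κ := by
    show j.toAlgHom (ψ.toAlgHom genS) = _
    rw [hψ, j.commd genD, hj, hda]
  have hcomm : φ ≫ ι = ψ ≫ j := (huχ _ h1).trans (huχ _ h2).symm
  -- the universal construction
  have desc : ∀ c : PushoutCocone φ ψ,
      ∃ u : E ⟶ c.pt, (ι ≫ u = c.inl) ∧ (j ≫ u = c.inr) ∧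
        (∀ m : E ⟶ c.pt, ι ≫ m = c.inl → j ≫ m = c.inr → m = u) := by
    intro c
    set V : DGA k := c.pt with hV
    have hb : c.inr.toAlgHom genD ∈ V.grading n := c.inr.grade hgenD
    obtain ⟨q, ⟨hqg, hqι, hqa⟩, hquniq⟩ :=
      hfree V.toGrAlg c.inl.toAlgHom (fun m t ht => c.inl.grade ht) (c.inr.toAlgHom genD) hb
    have hcond := c.condition
    have hcondS : c.inl.toAlgHom (φ.toAlgHom genS) = c.inr.toAlgHom (ψ.toAlgHom genS) :=
      DFunLike.congr_fun (congrArg DGAHom.toAlgHom hcond) genS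
    have hq' : q (ι.toAlgHom κ) = c.inl.toAlgHom κ := DFunLike.congr_fun hqι κ
    have h3 : q (E.d a) = V.d (q a) := by
      rw [hda, hqa, hq', ← hφ, hcondS, hψ, c.inr.commd genD]
    have hcd : ∀ e, q (E.d e) = V.d (q e) :=
      commd_key n ι a ha hfree V c.inl q hqg hqι h3
    refine ⟨⟨q, fun he => hqg _ _ he, hcd⟩, ?_, ?_, ?_⟩
    · exact DGAHom.ext hqι
    · -- uniqueness of maps out of Dsc
      obtain ⟨ψ₀, hψ₀, hψuniq⟩ := hDscUP V (c.inr.toAlgHom genD) hb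
      have hju : (j ≫ ⟨q, fun he => hqg _ _ he, hcd⟩ : Dsc ⟶ V).toAlgHom genD
          = c.inr.toAlgHom genD := by
        show q (j.toAlgHom genD) = _
        rw [hj, hqa]
      exact (hψuniq _ hju).trans (hψuniq _ rfl).symm
    · intro m hm1 hm2
      apply DGAHom.ext
      have hma : m.toAlgHom a = c.inr.toAlgHom genD := by
        rw [← hj]
        exact DFunLike.congr_fun (congrArg DGAHom.toAlgHom hm2) genD
      exact hquniq m.toAlgHom ⟨fun mm e he => m.grade he,
        congrArg DGAHom.toAlgHom hm1, hma⟩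
  choose u hu1 hu2 hu3 using desc
  constructor
  · have hcolim : IsColimit (PushoutCocone.mk ι j hcomm) :=
      PushoutCocone.IsColimit.mk hcomm u hu1 hu2
        (fun c m hm1 hm2 => hu3 c m hm1 hm2)
    exact IsPushout.of_isColimit hcolim
  · refine ⟨PUnit.{u+1}, PUnit.instLinearOrder.{u}, ⟨WellFounded.intro fun x => Acc.intro x (fun _ hy => hy.elim)⟩, fun _ => a, fun _ => n,
      fun _ => ha, ?_, ?_⟩
    · intro B p hp b hb
      obtain ⟨q, ⟨hq1, hq2, hq3⟩, hquniq⟩ := hfree B p hp (b PUnit.unit) (hb PUnit.unit)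
      refine ⟨q, ⟨hq1, hq2, fun j' => ?_⟩, fun q' hq' => hquniq q' ⟨hq'.1, hq'.2.1, hq'.2.2 PUnit.unit⟩⟩
      cases j'
      exact hq3
    · intro j'
      rw [hda]
      exact Algebra.subset_adjoin (Or.inl ⟨κ, rfl⟩)
end
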